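/- The Schur multiplier of the 3-dimensional Heisenberg Lie algebra H(1) has dimension 2. -/

import Mathlib

open Module

instance Prod.instLieRingBracket (L M : Type*) [LieRing L] [LieRing M] :
    Bracket (L × M) (L × M) :=
  ⟨fun x y => (⁅x.1, y.1⁆, ⁅x.2, y.2⁆)⟩

/-- Direct sum (product) of two Lie rings. -/
instance Prod.instLieRing (L M : Type*) [LieRing L] [LieRing M] : LieRing (L × M) where
  add_lie x y z := by ext <;> simp [Bracket.bracket, add_lie]
  lie_add x y z := by ext <;> simp [Bracket.bracket, lie_add]
  lie_self x := by ext <;> simp [Bracket.bracket]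
  leibniz_lie x y z := by ext <;> simp [Bracket.bracket]

instance Prod.instLieAlgebra (k L M : Type*) [CommRing k] [LieRing L] [LieRing M]
    [LieAlgebra k L] [LieAlgebra k M] : LieAlgebra k (L × M) where
  lie_smul t x y := by ext <;> simp [Bracket.bracket, lie_smul]

section Schur
variable (k : Type*) [Field k] (L : Type*) [LieRing L] [LieAlgebra k L]

/-- The canonical free presentation map `FreeLieAlgebra k L → L`. -/
noncomputable def presPi : FreeLieAlgebra k L →ₗ⁅k⁆ L := FreeLieAlgebra.lift k id

/-- `R ∩ F²` for the canonical free presentation `0 → R → F → L → 0`. -/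
noncomputable def multNum : LieIdeal k (FreeLieAlgebra k L) :=
  (presPi k L).ker ⊓ ⁅(⊤ : LieIdeal k (FreeLieAlgebra k L)), (⊤ : LieIdeal k (FreeLieAlgebra k L))⁆

/-- `[R, F]` for the canonical free presentation. -/
noncomputable def multDen : LieIdeal k (FreeLieAlgebra k L) :=
  ⁅(presPi k L).ker, (⊤ : LieIdeal k (FreeLieAlgebra k L))⁆

/-- The Schur multiplier `M(L) = (R ∩ F²)/[R,F]`, as a Lie algebra (it is abelian). -/
noncomputable def schurMultiplier :=
  (↥(multNum k L)) ⧸ (LieIdeal.comap ((multNum k L) : LieSubalgebra k (FreeLieAlgebra k L)).incl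
    (multDen k L))

noncomputable instance : LieRing (schurMultiplier k L) := by unfold schurMultiplier; infer_instance
noncomputable instance : LieAlgebra k (schurMultiplier k L) := by
  unfold schurMultiplier; infer_instance
noncomputable instance : Module k (schurMultiplier k L) := by
  unfold schurMultiplier; infer_instance

/-- dim M(L). -/
noncomputable def schurMultDim : ℕ := Module.finrank k (schurMultiplier k L)

/-- The derived subalgebra `L² = [L,L]` as an ideal. -/
noncomputable def derivedIdeal : LieIdeal k L := ⁅(⊤ : LieIdeal k L), (⊤ : LieIdeal k L)⁆

end Schur


section AuxHeis

variable {k : Type*} [Field k] {H : Type*} [LieRing H] [LieAlgebra k H]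

/-- A 2-cocycle on `H` with values in `k × k`, packaged with the identities needed to
build a central extension. -/
structure HCocycle (k H : Type*) [Field k] [LieRing H] [LieAlgebra k H] where
  B : H →ₗ[k] H →ₗ[k] k × k
  alt : ∀ h, B h h = 0
  leib : ∀ p q r : H, B p ⁅q, r⁆ = B ⁅p, q⁆ r + B q ⁅p, r⁆

/-- Central extension of `H` by `k × k` along a cocycle (type synonym). -/
def CExt {k H : Type*} [Field k] [LieRing H] [LieAlgebra k H] (_c : HCocycle k H) : Type _ :=
  H × k × k

namespace CExt
variable {c : HCocycle k H}

instance : AddCommGroup (CExt c) := inferInstanceAs (AddCommGroup (H × k × k))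
instance : Module k (CExt c) := inferInstanceAs (Module k (H × k × k))

def pr1 (p : CExt c) : H := p.1
def pr2 (p : CExt c) : k × k := p.2
def mk' (h : H) (u : k × k) : CExt c := (h, u)

@[simp] lemma pr1_mk (h : H) (u : k × k) : pr1 (mk' (c := c) h u) = h := rfl
@[simp] lemma pr2_mk (h : H) (u : k × k) : pr2 (mk' (c := c) h u) = u := rfl
@[simp] lemma pr1_add (p q : CExt c) : pr1 (p + q) = pr1 p + pr1 q := rfl
@[simp] lemma pr2_add (p q : CExt c) : pr2 (p + q) = pr2 p + pr2 q := rfl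
@[simp] lemma pr1_smul (t : k) (p : CExt c) : pr1 (t • p) = t • pr1 p := rfl
@[simp] lemma pr2_smul (t : k) (p : CExt c) : pr2 (t • p) = t • pr2 p := rfl
@[simp] lemma pr1_zero : pr1 (0 : CExt c) = 0 := rfl
@[simp] lemma pr2_zero : pr2 (0 : CExt c) = 0 := rfl

lemma ext {p q : CExt c} (h1 : pr1 p = pr1 q) (h2 : pr2 p = pr2 q) : p = q :=
  Prod.ext h1 h2

instance : Bracket (CExt c) (CExt c) := ⟨fun p q => (⁅pr1 p, pr1 q⁆, c.B (pr1 p) (pr1 q))⟩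

@[simp] lemma pr1_bracket (p q : CExt c) : pr1 ⁅p, q⁆ = ⁅pr1 p, pr1 q⁆ := rfl
@[simp] lemma pr2_bracket (p q : CExt c) : pr2 ⁅p, q⁆ = c.B (pr1 p) (pr1 q) := rfl

instance : LieRing (CExt c) where
  add_lie p q r := by
    refine ext ?_ ?_ <;> simp [add_lie]
  lie_add p q r := by
    refine ext ?_ ?_ <;> simp [lie_add]
  lie_self p := by
    refine ext ?_ ?_ <;> simp [c.alt]
  leibniz_lie p q r := by
    refine ext ?_ ?_
    · simp
    · simp only [pr2_bracket, pr1_bracket, pr2_add]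
      exact c.leib _ _ _

instance : LieAlgebra k (CExt c) where
  lie_smul t p q := by refine ext ?_ ?_ <;> simp

/-- Projection onto `H` as a Lie algebra morphism. -/
def fstHom (c : HCocycle k H) : CExt c →ₗ⁅k⁆ H where
  toFun := pr1
  map_add' _ _ := rfl
  map_smul' _ _ := rfl
  map_lie' := rfl

@[simp] lemma fstHom_apply (p : CExt c) : fstHom c p = pr1 p := rfl

lemma bracket_eq_zero_of_pr1_eq_zero {p : CExt c} (hp : pr1 p = 0) (q : CExt c) :
    ⁅p, q⁆ = 0 := by
  refine ext ?_ ?_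
  · rw [pr1_bracket, hp, zero_lie, pr1_zero]
  · rw [pr2_bracket, hp, map_zero, LinearMap.zero_apply, pr2_zero]

end CExt

/-- The 2-cocycle associated to a Heisenberg-type structure. -/
noncomputable def mkHCocycle (a b c : H →ₗ[k] k)
    (ha : ∀ p q : H, a ⁅p, q⁆ = 0) (hb : ∀ p q : H, b ⁅p, q⁆ = 0)
    (hc : ∀ p q : H, c ⁅p, q⁆ = a p * b q - a q * b p) : HCocycle k H where
  B := LinearMap.mk₂ k (fun p q => (a p * c q - c p * a q, b p * c q - c p * b q))
    (fun p p' q => by simp only [map_add, Prod.mk_add_mk, Prod.mk.injEq]; constructor <;> ring)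
    (fun t p q => by simp only [map_smul, smul_eq_mul, Prod.smul_mk, Prod.mk.injEq]
                     constructor <;> ring)
    (fun p q q' => by simp only [map_add, Prod.mk_add_mk, Prod.mk.injEq]; constructor <;> ring)
    (fun t p q => by simp only [map_smul, smul_eq_mul, Prod.smul_mk, Prod.mk.injEq]
                     constructor <;> ring)
  alt h := by
    simp only [LinearMap.mk₂_apply, Prod.mk_eq_zero]
    constructor <;> ring
  leib p q r := by
    simp only [LinearMap.mk₂_apply, ha, hb, hc, Prod.mk_add_mk, Prod.mk.injEq]
    constructor <;> ring

@[simp] lemma mkHCocycle_B_apply (a b c : H →ₗ[k] k) (ha) (hb) (hc) (p q : H) :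
    (mkHCocycle a b c ha hb hc).B p q
      = (a p * c q - c p * a q, b p * c q - c p * b q) := rfl

/-- Existence of a Heisenberg basis and dual coordinates. -/
lemma heisSetup (k : Type*) [Field k] (H : Type*) [LieRing H] [LieAlgebra k H]
    [FiniteDimensional k H] (hH3 : Module.finrank k H = 3)
    (hHc : derivedIdeal k H = LieAlgebra.center k H)
    (hH1 : Module.finrank k ↥(derivedIdeal k H) = 1) :
    ∃ (x y z : H) (a b c : H →ₗ[k] k), z ≠ 0 ∧ ⁅x, y⁆ = z ∧ (∀ h : H, ⁅h, z⁆ = 0) ∧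
      (∀ h : H, h = a h • x + b h • y + c h • z) ∧
      (∀ h h' : H, ⁅h, h'⁆ = (a h * b h' - a h' * b h) • z) ∧
      a x = 1 ∧ a y = 0 ∧ a z = 0 ∧ b x = 0 ∧ b y = 1 ∧ b z = 0 ∧
      c x = 0 ∧ c y = 0 ∧ c z = 1 := by
  classical
  have hfr : Module.finrank k (derivedIdeal k H).toSubmodule = 1 := hH1
  obtain ⟨x, y, hxy⟩ : ∃ x y : H, ⁅x, y⁆ ≠ 0 := by
    by_contra hno
    push_neg at hno
    have hle : derivedIdeal k H ≤ ⊥ := by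
      rw [derivedIdeal, LieSubmodule.lie_le_iff]
      intro a _ m _
      simp [hno a m]
    rw [le_bot_iff] at hle
    rw [hle] at hfr
    simp at hfr
  set z : H := ⁅x, y⁆ with hz
  have hzD : z ∈ derivedIdeal k H := LieSubmodule.lie_mem_lie trivial trivial
  have hzc : ∀ h : H, ⁅h, z⁆ = 0 := by
    intro h
    have hzcen : z ∈ LieAlgebra.center k H := hHc ▸ hzD
    exact (LieModule.mem_maxTrivSubmodule k H H z).1 hzcen h
  have hzc' : ∀ h : H, ⁅z, h⁆ = 0 := fun h => by
    rw [← lie_skew, hzc h, neg_zero]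
  have hli : LinearIndependent k ![x, y, z] := by
    rw [Fintype.linearIndependent_iff]
    intro g hg
    rw [Fin.sum_univ_three] at hg
    simp only [Matrix.cons_val_zero, Matrix.cons_val_one, Matrix.head_cons,
      Matrix.cons_val_two, Matrix.tail_cons] at hg
    have h1 : g 1 = 0 := by
      have := congrArg (fun w => ⁅x, w⁆) hg
      simp only [lie_add, lie_smul, lie_self, lie_zero, smul_zero, zero_add, add_zero,
        hzc x, ← hz] at this
      rcases smul_eq_zero.1 this with h | h
      · exact h
      · exact absurd h hxy
    have h0 : g 0 = 0 := by
      have := congrArg (fun w => ⁅y, w⁆) hg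
      have hyx : ⁅y, x⁆ = -z := by rw [← lie_skew, hz]
      simp only [lie_add, lie_smul, lie_self, lie_zero, smul_zero, add_zero, zero_add,
        hzc y, hyx, smul_neg] at this
      rcases neg_eq_zero.1 this with h
      rcases smul_eq_zero.1 h with h | h
      · exact h
      · exact absurd h hxy
    have h2 : g 2 = 0 := by
      rw [h0, h1, zero_smul, zero_smul, zero_add, zero_add] at hg
      rcases smul_eq_zero.1 hg with h | h
      · exact h
      · exact absurd h hxy
    intro i
    fin_cases i <;> assumption
  obtain ⟨e, he⟩ : ∃ e : Basis (Fin 3) k H, ∀ i, e i = ![x, y, z] i := by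
    refine ⟨basisOfLinearIndependentOfCardEqFinrank hli (by simp [hH3]), fun i => ?_⟩
    rw [coe_basisOfLinearIndependentOfCardEqFinrank]
  have hex : e 0 = x := by rw [he]; rfl
  have hey : e 1 = y := by rw [he]; rfl
  have hez : e 2 = z := by rw [he]; rfl
  set a : H →ₗ[k] k := e.coord 0 with ha
  set b : H →ₗ[k] k := e.coord 1 with hb
  set c : H →ₗ[k] k := e.coord 2 with hc
  have havals : a x = 1 ∧ a y = 0 ∧ a z = 0 := by
    refine ⟨?_, ?_, ?_⟩ <;>
      simp [ha, ← hex, ← hey, ← hez, Basis.coord_apply, Basis.repr_self]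
  have hbvals : b x = 0 ∧ b y = 1 ∧ b z = 0 := by
    refine ⟨?_, ?_, ?_⟩ <;>
      simp [hb, ← hex, ← hey, ← hez, Basis.coord_apply, Basis.repr_self]
  have hcvals : c x = 0 ∧ c y = 0 ∧ c z = 1 := by
    refine ⟨?_, ?_, ?_⟩ <;>
      simp [hc, ← hex, ← hey, ← hez, Basis.coord_apply, Basis.repr_self]
  have hrep : ∀ h : H, h = a h • x + b h • y + c h • z := by
    intro h
    conv_lhs => rw [← e.sum_repr h]
    rw [Fin.sum_univ_three, hex, hey, hez]
    rfl
  have hbrak : ∀ h h' : H, ⁅h, h'⁆ = (a h * b h' - a h' * b h) • z := by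
    intro h h'
    have hyx : ⁅y, x⁆ = -z := by rw [← lie_skew, hz]
    conv_lhs => rw [hrep h, hrep h']
    simp only [lie_add, add_lie, lie_smul, smul_lie, lie_self, hzc, hzc', hyx, ← hz,
      smul_zero, zero_add, add_zero, smul_neg, smul_smul]
    module
  exact ⟨x, y, z, a, b, c, hxy, rfl, hzc, hrep, hbrak, havals.1, havals.2.1, havals.2.2,
    hbvals.1, hbvals.2.1, hbvals.2.2, hcvals.1, hcvals.2.1, hcvals.2.2⟩

end AuxHeis


set_option maxHeartbeats 1600000 in
theorem stmt3 (k : Type*) [Field k] (H : Type*) [LieRing H] [LieAlgebra k H]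
    [FiniteDimensional k H] (hH3 : finrank k H = 3)
    (hHc : derivedIdeal k H = LieAlgebra.center k H)
    (hH1 : finrank k ↥(derivedIdeal k H) = 1) :
    schurMultDim k H = 2 := by
  classical
  obtain ⟨x, y, z, a, b, c, hzne, hxyz, hzc, hrep, hbrak, hax, hay, haz, hbx, hby, hbz,
    hcx, hcy, hcz⟩ := heisSetup k H hH3 hHc hH1
  -- cocycle facts
  have ha0 : ∀ p q : H, a ⁅p, q⁆ = 0 := fun p q => by
    rw [hbrak p q, map_smul, haz, smul_zero]
  have hb0 : ∀ p q : H, b ⁅p, q⁆ = 0 := fun p q => by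
    rw [hbrak p q, map_smul, hbz, smul_zero]
  have hc0 : ∀ p q : H, c ⁅p, q⁆ = a p * b q - a q * b p := fun p q => by
    rw [hbrak p q, map_smul, hcz, smul_eq_mul, mul_one]
  set co : HCocycle k H := mkHCocycle a b c ha0 hb0 hc0 with hco
  set F := FreeLieAlgebra k H with hF
  set τ : FreeLieAlgebra k H →ₗ⁅k⁆ CExt co := FreeLieAlgebra.lift k (fun h => CExt.mk' h 0)
    with hτ
  have hτof : ∀ h : H, τ (FreeLieAlgebra.of k h) = CExt.mk' h 0 := fun h =>
    FreeLieAlgebra.lift_of_apply _ h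
  have hπof : ∀ h : H, presPi k H (FreeLieAlgebra.of k h) = h := fun h =>
    FreeLieAlgebra.lift_of_apply id h
  have hfst : ∀ f : FreeLieAlgebra k H, CExt.pr1 (τ f) = presPi k H f := by
    have : (CExt.fstHom co).comp τ = presPi k H := by
      apply FreeLieAlgebra.hom_ext
      intro h
      rw [LieHom.comp_apply, hτof, hπof]
      rfl
    intro f
    have := DFunLike.congr_fun this f
    rwa [LieHom.comp_apply] at this
  -- ideals in the free Lie algebra
  set R : LieIdeal k (FreeLieAlgebra k H) := (presPi k H).ker with hR
  have hmemR : ∀ f : FreeLieAlgebra k H, f ∈ R ↔ presPi k H f = 0 := fun f => LieHom.mem_ker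
  -- multDen is killed by τ
  have hDker : multDen k H ≤ τ.ker := by
    show ⁅(presPi k H).ker, (⊤ : LieIdeal k (FreeLieAlgebra k H))⁆ ≤ τ.ker
    rw [LieSubmodule.lie_le_iff]
    intro r hr f _
    rw [LieHom.mem_ker, LieHom.map_lie]
    refine CExt.bracket_eq_zero_of_pr1_eq_zero ?_ (τ f)
    rw [hfst r]
    exact (hmemR r).1 hr
  have hDR : multDen k H ≤ R := LieSubmodule.lie_le_left _ _
  have hDN : multDen k H ≤ multNum k H :=
    le_inf hDR (LieSubmodule.mono_lie le_top le_top)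
  -- distinguished elements
  set c1 : FreeLieAlgebra k H := ⁅FreeLieAlgebra.of k x, FreeLieAlgebra.of k y⁆ with hc1
  set c2 : FreeLieAlgebra k H := ⁅FreeLieAlgebra.of k x, FreeLieAlgebra.of k z⁆ with hc2
  set c3 : FreeLieAlgebra k H := ⁅FreeLieAlgebra.of k y, FreeLieAlgebra.of k z⁆ with hc3
  have hπc1 : presPi k H c1 = z := by rw [hc1, LieHom.map_lie, hπof, hπof, hxyz]
  have hπc2 : presPi k H c2 = 0 := by rw [hc2, LieHom.map_lie, hπof, hπof, hzc]
  have hπc3 : presPi k H c3 = 0 := by rw [hc3, LieHom.map_lie, hπof, hπof, hzc]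
  set r0 : FreeLieAlgebra k H := c1 - FreeLieAlgebra.of k z with hr0
  have hr0R : r0 ∈ R := by
    rw [hmemR, hr0, map_sub, hπc1, hπof, sub_self]
  have hc2R : c2 ∈ R := (hmemR c2).2 hπc2
  have hc3R : c3 ∈ R := (hmemR c3).2 hπc3
  have hc2N : c2 ∈ multNum k H :=
    ⟨hc2R, LieSubmodule.lie_mem_lie trivial trivial⟩
  have hc3N : c3 ∈ multNum k H :=
    ⟨hc3R, LieSubmodule.lie_mem_lie trivial trivial⟩
  -- the submodule W
  set DS : Submodule k (FreeLieAlgebra k H) := (multDen k H).toSubmodule with hDS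
  set S3 : Submodule k (FreeLieAlgebra k H) := Submodule.span k {c1, c2, c3} with hS3
  set W : Submodule k (FreeLieAlgebra k H) := DS ⊔ S3 with hW
  have hc1W : c1 ∈ W := le_sup_right (a := DS) (Submodule.subset_span (by simp))
  have hc2W : c2 ∈ W := le_sup_right (a := DS) (Submodule.subset_span (by simp))
  have hc3W : c3 ∈ W := le_sup_right (a := DS) (Submodule.subset_span (by simp))
  have hDW : ∀ r f : FreeLieAlgebra k H, r ∈ R → ⁅r, f⁆ ∈ W ∧ ⁅f, r⁆ ∈ W := by
    intro r f hr
    have h1 : ⁅r, f⁆ ∈ W := le_sup_left (b := S3) (LieSubmodule.lie_mem_lie hr trivial)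
    refine ⟨h1, ?_⟩
    rw [← lie_skew]
    exact W.neg_mem h1
  -- decomposition of an arbitrary element of F
  have hdec : ∀ f : FreeLieAlgebra k H, ∃ r ∈ R,
      f = a (presPi k H f) • FreeLieAlgebra.of k x + b (presPi k H f) • FreeLieAlgebra.of k y
        + c (presPi k H f) • FreeLieAlgebra.of k z + r := by
    intro f
    refine ⟨f - (a (presPi k H f) • FreeLieAlgebra.of k x
      + b (presPi k H f) • FreeLieAlgebra.of k y
      + c (presPi k H f) • FreeLieAlgebra.of k z), ?_, by abel⟩
    rw [hmemR, map_sub, map_add, map_add, map_smul,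
      map_smul, map_smul, hπof, hπof, hπof, sub_eq_zero]
    exact hrep (presPi k H f)
  -- brackets of generators lie in W
  have hgg : ∀ u v : H, (u = x ∨ u = y ∨ u = z) → (v = x ∨ v = y ∨ v = z) →
      ⁅FreeLieAlgebra.of k u, FreeLieAlgebra.of k v⁆ ∈ W := by
    have hyx : ⁅FreeLieAlgebra.of k y, FreeLieAlgebra.of k x⁆ = -c1 := by
      rw [hc1, ← lie_skew]
    have hzx : ⁅FreeLieAlgebra.of k z, FreeLieAlgebra.of k x⁆ = -c2 := by
      rw [hc2, ← lie_skew]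
    have hzy : ⁅FreeLieAlgebra.of k z, FreeLieAlgebra.of k y⁆ = -c3 := by
      rw [hc3, ← lie_skew]
    rintro u v (rfl | rfl | rfl) (rfl | rfl | rfl)
    · rw [lie_self]; exact W.zero_mem
    · exact hc1W
    · exact hc2W
    · rw [hyx]; exact W.neg_mem hc1W
    · rw [lie_self]; exact W.zero_mem
    · exact hc3W
    · rw [hzx]; exact W.neg_mem hc2W
    · rw [hzy]; exact W.neg_mem hc3W
    · rw [lie_self]; exact W.zero_mem
  -- bracket of a generator with anything lies in W
  have hgW : ∀ u : H, (u = x ∨ u = y ∨ u = z) → ∀ g : FreeLieAlgebra k H,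
      ⁅FreeLieAlgebra.of k u, g⁆ ∈ W := by
    intro u hu g
    obtain ⟨r, hrR, hg⟩ := hdec g
    rw [hg]
    simp only [lie_add, lie_smul]
    refine W.add_mem (W.add_mem (W.add_mem ?_ ?_) ?_) ?_
    · have h' := W.smul_mem (a (presPi k H g)) (hgg u x hu (Or.inl rfl))
      exact h'
    · have h' := W.smul_mem (b (presPi k H g)) (hgg u y hu (Or.inr (Or.inl rfl)))
      exact h'
    · have h' := W.smul_mem (c (presPi k H g)) (hgg u z hu (Or.inr (Or.inr rfl)))
      exact h'
    · exact (hDW r _ hrR).2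
  -- all brackets lie in W
  have hFFW : ∀ f g : FreeLieAlgebra k H, ⁅f, g⁆ ∈ W := by
    intro f g
    obtain ⟨r, hrR, hf⟩ := hdec f
    rw [hf]
    simp only [add_lie, smul_lie]
    refine W.add_mem (W.add_mem (W.add_mem ?_ ?_) ?_) ?_
    · exact W.smul_mem _ (hgW x (Or.inl rfl) g)
    · exact W.smul_mem _ (hgW y (Or.inr (Or.inl rfl)) g)
    · exact W.smul_mem _ (hgW z (Or.inr (Or.inr rfl)) g)
    · exact (hDW r g hrR).1
  -- W is a Lie ideal
  have hWlie : ∀ (f : FreeLieAlgebra k H) (w : FreeLieAlgebra k H), w ∈ W → ⁅f, w⁆ ∈ W := by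
    intro f w hw
    obtain ⟨d, hd, s, hs, rfl⟩ := Submodule.mem_sup.1 hw
    rw [lie_add]
    refine W.add_mem ((hDW d f (hDR hd)).2) ?_
    have hcomap : S3 ≤ Submodule.comap ((LieAlgebra.ad k (FreeLieAlgebra k H) f) :
        FreeLieAlgebra k H →ₗ[k] FreeLieAlgebra k H) W := by
      rw [hS3, Submodule.span_le]
      intro w' hw'
      simp only [Set.mem_insert_iff, Set.mem_singleton_iff] at hw'
      rw [SetLike.mem_coe, Submodule.mem_comap, LieAlgebra.ad_apply]
      rcases hw' with rfl | rfl | rfl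
      · -- ⁅f, c1⁆
        have hsplit : c1 = FreeLieAlgebra.of k z + r0 := by rw [hr0]; abel
        rw [hsplit, lie_add]
        refine W.add_mem ?_ ((hDW r0 f hr0R).2)
        rw [← lie_skew]
        exact W.neg_mem (hgW z (Or.inr (Or.inr rfl)) f)
      · exact (hDW c2 f hc2R).2
      · exact (hDW c3 f hc3R).2
    have := hcomap hs
    rw [Submodule.mem_comap, LieAlgebra.ad_apply] at this
    exact this
  -- F² is contained in W
  have hlieW : ∀ w : FreeLieAlgebra k H,
      w ∈ (⁅(⊤ : LieIdeal k (FreeLieAlgebra k H)), (⊤ : LieIdeal k (FreeLieAlgebra k H))⁆ :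
        LieIdeal k (FreeLieAlgebra k H)) → w ∈ W := by
    set WI : LieIdeal k (FreeLieAlgebra k H) :=
      { W with lie_mem := fun {f w} hw => hWlie f w hw } with hWI
    have hle : (⁅(⊤ : LieIdeal k (FreeLieAlgebra k H)),
        (⊤ : LieIdeal k (FreeLieAlgebra k H))⁆ : LieIdeal k (FreeLieAlgebra k H)) ≤ WI := by
      rw [LieSubmodule.lie_le_iff]
      intro f _ g _
      exact hFFW f g
    intro w hw
    exact hle hw
  -- every element of multNum is congruent to a combination of c2, c3 mod multDen
  have hclaim : ∀ w : FreeLieAlgebra k H, w ∈ multNum k H →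
      ∃ β γ : k, w - β • c2 - γ • c3 ∈ multDen k H := by
    intro w hw
    have hwR : presPi k H w = 0 := (hmemR w).1 hw.1
    have hwW : w ∈ W := hlieW w hw.2
    obtain ⟨d, hd, s, hs, hds⟩ := Submodule.mem_sup.1 hwW
    rw [hS3] at hs
    obtain ⟨α, w1, hw1, hs'⟩ := Submodule.mem_span_insert.1 hs
    obtain ⟨β, w2, hw2, hw1'⟩ := Submodule.mem_span_insert.1 hw1
    obtain ⟨γ, hγ⟩ := Submodule.mem_span_singleton.1 hw2
    have hπd : presPi k H d = 0 := (hmemR d).1 (hDR hd)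
    have hcalc : presPi k H w = α • z := by
      rw [← hds, hs', hw1', ← hγ]
      rw [map_add, map_add, map_add, map_smul, map_smul,
        map_smul, hπd, hπc1, hπc2, hπc3, smul_zero, smul_zero, zero_add, add_zero,
        add_zero]
    have hα : α = 0 := by
      rw [hwR] at hcalc
      rcases smul_eq_zero.1 hcalc.symm with h | h
      · exact h
      · exact absurd h hzne
    refine ⟨β, γ, ?_⟩
    have hwd : w - β • c2 - γ • c3 = d := by
      rw [← hds, hs', hw1', ← hγ, hα, zero_smul]
      abel
    rw [hwd]
    exact hd
  -- the linear map to k × k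
  set ψ : (↥(multNum k H)) →ₗ[k] k × k :=
    { toFun := fun w => CExt.pr2 (τ (w : FreeLieAlgebra k H)),
      map_add' := fun u v => by
        rw [show ((u + v : ↥(multNum k H)) : FreeLieAlgebra k H)
          = (u : FreeLieAlgebra k H) + (v : FreeLieAlgebra k H) from rfl,
          map_add, CExt.pr2_add]
      map_smul' := fun t u => by
        rw [show ((t • u : ↥(multNum k H)) : FreeLieAlgebra k H)
          = t • (u : FreeLieAlgebra k H) from rfl, map_smul, CExt.pr2_smul]
        rfl } with hψ
  have hψapp : ∀ w : ↥(multNum k H), ψ w = CExt.pr2 (τ (w : FreeLieAlgebra k H)) := fun w => rfl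
  set II : LieIdeal k ↥(multNum k H) :=
    LieIdeal.comap ((multNum k H : LieSubalgebra k (FreeLieAlgebra k H))).incl (multDen k H)
    with hII
  have hmemII : ∀ w : ↥(multNum k H), w ∈ II ↔ (w : FreeLieAlgebra k H) ∈ multDen k H := by
    intro w
    rw [hII]
    rfl
  have hIsub : (II : Submodule k ↥(multNum k H)) ≤ LinearMap.ker ψ := by
    intro w hw
    rw [LinearMap.mem_ker, hψapp]
    have hτ0 : τ (w : FreeLieAlgebra k H) = 0 :=
      (LieHom.mem_ker).1 (hDker ((hmemII w).1 hw))
    rw [hτ0, CExt.pr2_zero]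
  set ψq : ((↥(multNum k H)) ⧸ (II : Submodule k ↥(multNum k H))) →ₗ[k] k × k :=
    Submodule.liftQ (II : Submodule k ↥(multNum k H)) ψ hIsub with hψq
  set r1 : ↥(multNum k H) := ⟨c2, hc2N⟩ with hr1
  set r2 : ↥(multNum k H) := ⟨c3, hc3N⟩ with hr2
  set t0 : (k × k) →ₗ[k] ↥(multNum k H) :=
    (LinearMap.fst k k k).smulRight r1 + (LinearMap.snd k k k).smulRight r2 with ht0
  set Smap : (k × k) →ₗ[k] ((↥(multNum k H)) ⧸ (II : Submodule k ↥(multNum k H))) :=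
    (Submodule.mkQ (II : Submodule k ↥(multNum k H))) ∘ₗ t0 with hSmap
  have hSapp : ∀ p : k × k,
      Smap p = Submodule.Quotient.mk (p.1 • r1 + p.2 • r2) := fun p => rfl
  have hψr1 : ψ r1 = (1, 0) := by
    rw [hψapp, hr1]
    show CExt.pr2 (τ c2) = (1, 0)
    rw [hc2, LieHom.map_lie, hτof, hτof, CExt.pr2_bracket, CExt.pr1_mk, CExt.pr1_mk, hco,
      mkHCocycle_B_apply, hax, haz, hbx, hcx, hcz]
    norm_num
  have hψr2 : ψ r2 = (0, 1) := by
    rw [hψapp, hr2]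
    show CExt.pr2 (τ c3) = (0, 1)
    rw [hc3, LieHom.map_lie, hτof, hτof, CExt.pr2_bracket, CExt.pr1_mk, CExt.pr1_mk, hco,
      mkHCocycle_B_apply, hay, haz, hby, hcy, hcz]
    norm_num
  have hleft : ∀ p : k × k, ψq (Smap p) = p := by
    intro p
    rw [hSapp, hψq, Submodule.liftQ_apply, LinearMap.map_add, LinearMap.map_smul,
      LinearMap.map_smul, hψr1, hψr2]
    apply Prod.ext <;> simp
  have hSurj : Function.Surjective Smap := by
    intro q
    obtain ⟨w, rfl⟩ := Submodule.Quotient.mk_surjective _ q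
    obtain ⟨β, γ, hd⟩ := hclaim (w : FreeLieAlgebra k H) w.2
    refine ⟨(β, γ), ?_⟩
    rw [hSapp, Submodule.Quotient.eq]
    have hcoe : ((β • r1 + γ • r2 - w : ↥(multNum k H)) : FreeLieAlgebra k H)
        = -(((w : FreeLieAlgebra k H) - β • c2 - γ • c3)) := by
      show β • c2 + γ • c3 - (w : FreeLieAlgebra k H) = _
      abel
    show (β, γ).1 • r1 + (β, γ).2 • r2 - w ∈ II
    refine (hmemII _).2 ?_
    rw [hcoe]
    exact neg_mem hd
  have hinj : Function.Injective Smap := by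
    intro p q hpq
    rw [← hleft p, ← hleft q, hpq]
  have hfin : finrank k ((↥(multNum k H)) ⧸ (II : Submodule k ↥(multNum k H))) = 2 := by
    rw [← (LinearEquiv.ofBijective Smap ⟨hinj, hSurj⟩).finrank_eq]
    simp [Module.finrank_prod]
  exact hfin
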